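/- Set R̂(ξ) := 2·T·R(2ξ)·T⁻¹ and 𝒰(ξ) := [[v − 2ξ, −q],[q⁻¹, 0]]. Then Λ(R̂(ξ))·𝒰(ξ) = 𝒰(ξ)·R̂(ξ), an identity of 2×2 matrices over the Laurent ring B[[ξ⁻¹]][ξ]. -/

import Mathlib

set_option synthInstance.maxHeartbeats 1000000
set_option maxHeartbeats 1000000

noncomputable section

open scoped BigOperators

/-- Apply a zero-preserving map to all coefficients of a Laurent series. -/
def coeffMap {R S : Type*} [Zero R] [Zero S] (f : ZeroHom R S)
    (x : HahnSeries ℤ R) : HahnSeries ℤ S where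
  coeff n := f (x.coeff n)
  isPWO_support' := x.isPWO_support'.mono (by
    intro n hn
    simp only [Function.mem_support, ne_eq] at hn ⊢
    exact fun h => hn (by rw [h, map_zero]))

end
noncomputable section

variable {B : Type*} [CommRing B] [Algebra ℂ B]

/-- λ (resp. ξ), as a Laurent series in its inverse: the Hahn-series exponent `n`
records the power of λ⁻¹. -/
def lamB (B : Type*) [CommRing B] : LaurentSeries B := HahnSeries.single (-1 : ℤ) 1

/-- Constants of B, as Laurent series. -/
def CB (x : B) : LaurentSeries B := HahnSeries.C x

/-- A derivation of B applied coefficientwise to a Laurent series. -/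
def dmapB (d : Derivation ℂ B B) : LaurentSeries B → LaurentSeries B :=
  coeffMap ⟨fun x => d x, map_zero d⟩

/-- A ring automorphism of B applied coefficientwise to a Laurent series. -/
def amapB (f : B ≃+* B) : LaurentSeries B → LaurentSeries B :=
  coeffMap ⟨fun x => f x, map_zero f⟩

/-- Polynomial part in λ: keep the exponents n ≤ 0 of λ⁻¹. -/
def polyPartB (x : LaurentSeries B) : LaurentSeries B where
  coeff n := if n ≤ 0 then x.coeff n else 0
  isPWO_support' := x.isPWO_support'.mono (by
    intro n hn
    simp only [Function.mem_support, ne_eq] at hn ⊢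
    intro h
    apply hn
    rw [h]
    simp)

/-- The substitution λ = 2ξ: the coefficient of ξ⁻ⁿ in R(2ξ) is 2⁻ⁿ times the
coefficient of λ⁻ⁿ in R(λ). -/
def scaleHalfB (x : LaurentSeries B) : LaurentSeries B where
  coeff n := ((2 : ℂ) ^ (-n) : ℂ) • x.coeff n
  isPWO_support' := x.isPWO_support'.mono (by
    intro n hn
    simp only [Function.mem_support, ne_eq] at hn ⊢
    exact fun h => hn (by rw [h, smul_zero]))

/-- U^{Toda}(λ) = [[v − λ, w],[−1, 0]]. -/
def UToda (v w : B) : Matrix (Fin 2) (Fin 2) (LaurentSeries B) :=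
  !![CB v - lamB B, CB w; -1, 0]

/-- V₀(λ) = [[λ, −w],[1, Λ⁻¹(v)]]. -/
def VToda0 (v w : B) (lamAut : B ≃+* B) : Matrix (Fin 2) (Fin 2) (LaurentSeries B) :=
  !![lamB B, -(CB w); 1, CB (lamAut.symm v)]

/-- The hypotheses on the Toda basic matrix resolvent R(λ). -/
def IsTodaMR (eb v w : B) (lamAut : B ≃+* B) (del : Derivation ℂ B B)
    (R : Matrix (Fin 2) (Fin 2) (LaurentSeries B)) : Prop :=
  (∀ i j : Fin 2, ∀ n : ℤ, n < 0 → (R i j).coeff n = 0) ∧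
  (∀ i j : Fin 2, ∀ n : ℤ, n ≤ 0 →
    ((R - !![(1 : LaurentSeries B), 0; 0, 0]) i j).coeff n = 0) ∧
  (R.map (amapB lamAut) * UToda v w = UToda v w * R) ∧
  R.trace = 1 ∧
  R.det = 0 ∧
  (CB eb • R.map (dmapB del) = VToda0 v w lamAut * R - R * VToda0 v w lamAut)

/-- R̂(ξ) = 2·T·R(2ξ)·T⁻¹. -/
def Rhat (r r' : B) (R : Matrix (Fin 2) (Fin 2) (LaurentSeries B)) :
    Matrix (Fin 2) (Fin 2) (LaurentSeries B) :=
  (2 : LaurentSeries B) •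
    (!![(-1 : LaurentSeries B), 0; 0, CB r] * R.map scaleHalfB *
      !![(-1 : LaurentSeries B), 0; 0, CB r'])

end
noncomputable section

variable {B : Type*} [CommRing B] [Algebra ℂ B]

lemma scaleHalfB_coeff (x : LaurentSeries B) (n : ℤ) :
    (scaleHalfB x).coeff n = ((2 : ℂ) ^ (-n) : ℂ) • x.coeff n := rfl

lemma amapB_coeff (f : B ≃+* B) (x : LaurentSeries B) (n : ℤ) :
    (amapB f x).coeff n = f (x.coeff n) := rfl

lemma scaleHalfB_support (x : LaurentSeries B) :
    (scaleHalfB x).support ⊆ x.support := by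
  intro n hn
  rw [HahnSeries.mem_support] at hn ⊢
  exact fun h => hn (by rw [scaleHalfB_coeff, h, smul_zero])

lemma scaleHalfB_mul (x y : LaurentSeries B) :
    scaleHalfB (x * y) = scaleHalfB x * scaleHalfB y := by
  ext n
  have h1 : ((2:ℂ)^(-n) : ℂ) • ∑ ij ∈ Finset.antidiagonal x.isPWO_support y.isPWO_support n,
        x.coeff ij.1 * y.coeff ij.2
      = ∑ ij ∈ Finset.antidiagonal x.isPWO_support y.isPWO_support n,
          (scaleHalfB x).coeff ij.1 * (scaleHalfB y).coeff ij.2 := by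
    rw [Finset.smul_sum]
    refine Finset.sum_congr rfl fun ij hij => ?_
    obtain ⟨-, -, hsum⟩ := Finset.mem_addAntidiagonal.mp hij
    rw [scaleHalfB_coeff, scaleHalfB_coeff, smul_mul_smul_comm,
      ← zpow_add₀ (two_ne_zero (α := ℂ)), ← neg_add, hsum]
  rw [scaleHalfB_coeff, HahnSeries.coeff_mul, h1, HahnSeries.coeff_mul]
  refine (Finset.sum_subset ?_ ?_).symm
  · intro ij hij
    rw [Finset.mem_addAntidiagonal] at hij ⊢
    exact ⟨scaleHalfB_support x hij.1, scaleHalfB_support y hij.2.1, hij.2.2⟩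
  · intro ij hij hij2
    rw [Finset.mem_addAntidiagonal] at hij hij2
    by_cases h : (scaleHalfB x).coeff ij.1 = 0
    · rw [h, zero_mul]
    · have h2 : (scaleHalfB y).coeff ij.2 = 0 := by
        by_contra h2
        exact hij2 ⟨h, h2, hij.2.2⟩
      rw [h2, mul_zero]

def scaleRH (B : Type*) [CommRing B] [Algebra ℂ B] :
    LaurentSeries B →+* LaurentSeries B where
  toFun := scaleHalfB
  map_one' := by
    ext n
    rw [scaleHalfB_coeff]
    by_cases h : n = 0
    · simp [h, HahnSeries.coeff_one]
    · simp [HahnSeries.coeff_one, h]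
  map_mul' := scaleHalfB_mul
  map_zero' := by ext n; rw [scaleHalfB_coeff]; simp
  map_add' x y := by
    ext n
    rw [scaleHalfB_coeff, HahnSeries.coeff_add, HahnSeries.coeff_add,
      scaleHalfB_coeff, scaleHalfB_coeff, smul_add]

def amapRH (f : B ≃+* B) : LaurentSeries B →+* LaurentSeries B where
  toFun := amapB f
  map_one' := by
    ext n
    rw [amapB_coeff]
    by_cases h : n = 0 <;> simp [HahnSeries.coeff_one, h]
  map_mul' x y := by
    show amapB f (x * y) = amapB f x * amapB f y
    have key : ∀ z : LaurentSeries B,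
        amapB f z = z.map (f : B →+* B).toNonUnitalRingHom := fun z => by
      ext n; rfl
    rw [key, key, key, HahnSeries.map_mul]
  map_zero' := by ext n; rw [amapB_coeff]; simp
  map_add' x y := by
    ext n
    rw [amapB_coeff, HahnSeries.coeff_add, HahnSeries.coeff_add, amapB_coeff, amapB_coeff,
      map_add]

lemma two_zpow_smul_comm (f : B ≃+* B) (m : ℤ) (b : B) :
    f ((2:ℂ)^m • b) = (2:ℂ)^m • f b := by
  have key : ∀ (k : ℕ) (x : B), f ((2:ℂ)^(k:ℤ) • x) = (2:ℂ)^(k:ℤ) • f x := by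
    intro k x
    rw [zpow_natCast, Algebra.smul_def, Algebra.smul_def, map_mul]
    congr 1
    simp only [map_pow, map_ofNat]
  obtain ⟨k, hk | hk⟩ := m.eq_nat_or_neg
  · subst hk; exact key k b
  · subst hk
    have h2 : ∀ x : B, (2:ℂ)^((k:ℤ)) • ((2:ℂ)^(-(k:ℤ)) • x) = x := fun x => by
      rw [smul_smul, ← zpow_add₀ (two_ne_zero (α := ℂ)), add_neg_cancel, zpow_zero, one_smul]
    have h2' : ∀ x : B, (2:ℂ)^(-(k:ℤ)) • ((2:ℂ)^((k:ℤ)) • x) = x := fun x => by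
      rw [smul_smul, ← zpow_add₀ (two_ne_zero (α := ℂ)), neg_add_cancel, zpow_zero, one_smul]
    have hb := key k ((2:ℂ)^(-(k:ℤ)) • b)
    rw [h2] at hb
    rw [hb, h2']

lemma amap_scale_comm (f : B ≃+* B) (x : LaurentSeries B) :
    amapB f (scaleHalfB x) = scaleHalfB (amapB f x) := by
  ext n
  rw [amapB_coeff, scaleHalfB_coeff, scaleHalfB_coeff, amapB_coeff]
  exact two_zpow_smul_comm f (-n) (x.coeff n)

lemma scale_CB (b : B) : scaleHalfB (CB b) = CB b := by
  ext n
  rw [scaleHalfB_coeff]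
  by_cases h : n = 0 <;> simp [CB, HahnSeries.C_apply, HahnSeries.coeff_single, h]

lemma scale_lamB : scaleHalfB (lamB B) = 2 * lamB B := by
  have h2 : (2 : LaurentSeries B) * lamB B = lamB B + lamB B := by ring
  ext n
  rw [scaleHalfB_coeff, h2, HahnSeries.coeff_add]
  by_cases h : n = -1
  · subst h
    have hc : (lamB B).coeff (-1 : ℤ) = (1 : B) := by
      simp [lamB, HahnSeries.coeff_single]
    rw [hc, neg_neg, zpow_one, show ((2:ℂ)) = ((2:ℕ):ℂ) by norm_num,
      Nat.cast_smul_eq_nsmul, two_smul]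
  · simp [lamB, HahnSeries.coeff_single, h]

lemma amap_CB (f : B ≃+* B) (b : B) : amapB f (CB b) = CB (f b) := by
  ext n
  rw [amapB_coeff]
  by_cases h : n = 0 <;> simp [CB, HahnSeries.C_apply, HahnSeries.coeff_single, h]


end
noncomputable section

/-- Λ(R̂(ξ))·𝒰(ξ) = 𝒰(ξ)·R̂(ξ), where R̂(ξ) = 2·T·R(2ξ)·T⁻¹ and
𝒰(ξ) = [[v − 2ξ, −q],[q⁻¹, 0]]. -/
theorem toda_nls_difference_Lax
    {B : Type*} [CommRing B] [Algebra ℂ B]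
    (eb ebi : B) (hebi : eb * ebi = 1)
    (del : Derivation ℂ B B) (hdeps : del eb = 0)
    (lam : B ≃+* B) (hlamdel : ∀ x, lam (del x) = del (lam x)) (hlameps : lam eb = eb)
    (q r v w : B) (q' r' : B) (hq' : q * q' = 1) (hr' : r * r' = 1)
    (hqr : q * r = w) (hqr1 : lam.symm q * r = 1)
    (hdq : eb * del q = q * v) (hdr : eb * del r = -(r * lam.symm v))
    (R : Matrix (Fin 2) (Fin 2) (LaurentSeries B))
    (hR : IsTodaMR eb v w lam del R) :
    (Rhat r r' R).map (amapB lam) *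
        !![CB v - 2 * lamB B, -(CB q); CB q', 0] =
      !![CB v - 2 * lamB B, -(CB q); CB q', 0] * Rhat r r' R := by
  obtain ⟨-, -, hmain, -, -, -⟩ := hR
  have hfun : ⇑(scaleRH B) = (scaleHalfB : LaurentSeries B → LaurentSeries B) := rfl
  have h0 : (R.map (amapB lam) * UToda v w).map ⇑(scaleRH B) =
      (UToda v w * R).map ⇑(scaleRH B) := by rw [hmain]
  rw [Matrix.map_mul, Matrix.map_mul, hfun] at h0
  -- scale the Toda matrix
  have hsub : ∀ a b : LaurentSeries B, scaleHalfB (a - b) = scaleHalfB a - scaleHalfB b :=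
    fun a b => map_sub (scaleRH B) a b
  have hnegS : scaleHalfB (-1 : LaurentSeries B) = -1 := by
    rw [show (scaleHalfB (-1 : LaurentSeries B)) = scaleRH B (-1) from rfl, map_neg, map_one]
  have hzeroS : scaleHalfB (0 : LaurentSeries B) = 0 := map_zero (scaleRH B)
  have hUscale : (UToda v w).map scaleHalfB = !![CB v - 2 * lamB B, CB w; -1, 0] := by
    refine Matrix.ext fun i j => ?_
    fin_cases i <;> fin_cases j <;>
      simp [UToda, Matrix.map_apply, hsub, scale_CB, scale_lamB, hnegS, hzeroS]
  have hcomm : (R.map (amapB lam)).map scaleHalfB = (R.map scaleHalfB).map (amapB lam) := by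
    refine Matrix.ext fun i j => ?_
    exact (amap_scale_comm lam (R i j)).symm
  rw [hcomm, hUscale] at h0
  set S := R.map scaleHalfB with hS
  set U' : Matrix (Fin 2) (Fin 2) (LaurentSeries B) :=
    !![CB v - 2 * lamB B, CB w; -1, 0] with hU'def
  -- scalar identities
  have hr'2 : r' * r = 1 := by rw [mul_comm]; exact hr'
  have hCBmul : ∀ a b : B, CB a * CB b = CB (a * b) := fun a b => by
    unfold CB; rw [← map_mul]
  have hCB1 : CB (1 : B) = (1 : LaurentSeries B) := map_one HahnSeries.C
  have hq : q * lam r = 1 := by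
    have h := congrArg lam hqr1
    rwa [map_mul, RingEquiv.apply_symm_apply, map_one] at h
  have hlr : lam r = q' := by
    calc lam r = lam r * (q * q') := by rw [hq', mul_one]
    _ = q * lam r * q' := by ring
    _ = q' := by rw [hq, one_mul]
  have hwr' : w * r' = q := by
    calc w * r' = q * (r * r') := by rw [← hqr, mul_assoc]
    _ = q := by rw [hr', mul_one]
  -- the four diagonal matrices
  set T : Matrix (Fin 2) (Fin 2) (LaurentSeries B) :=
    !![(-1 : LaurentSeries B), 0; 0, CB r] with hT
  set T' : Matrix (Fin 2) (Fin 2) (LaurentSeries B) :=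
    !![(-1 : LaurentSeries B), 0; 0, CB r'] with hT'
  set TL : Matrix (Fin 2) (Fin 2) (LaurentSeries B) :=
    !![(-1 : LaurentSeries B), 0; 0, CB (lam r)] with hTL
  set T'L : Matrix (Fin 2) (Fin 2) (LaurentSeries B) :=
    !![(-1 : LaurentSeries B), 0; 0, CB (lam r')] with hT'L
  have hTT : T' * T = 1 := by
    rw [hT', hT]
    refine Matrix.ext fun i j => ?_
    fin_cases i <;> fin_cases j <;>
      simp [Matrix.mul_apply, Fin.sum_univ_two, Matrix.one_apply, mul_assoc, hCBmul, hr'2,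
        hCB1] <;> ring
  have hTLL : T'L * TL = 1 := by
    have h3 : lam r' * lam r = 1 := by rw [← map_mul, hr'2, map_one]
    rw [hT'L, hTL]
    refine Matrix.ext fun i j => ?_
    fin_cases i <;> fin_cases j <;>
      simp [Matrix.mul_apply, Fin.sum_univ_two, Matrix.one_apply, mul_assoc, hCBmul, h3, hCB1]
        <;> ring
  have hCBq : CB w * CB r' = CB q := by rw [hCBmul, hwr']
  have hU : !![CB v - 2 * lamB B, -(CB q); CB q', 0] = TL * U' * T' := by
    rw [hTL, hU'def, hT']
    refine Matrix.ext fun i j => ?_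
    fin_cases i <;> fin_cases j <;>
      simp [Matrix.mul_apply, Fin.sum_univ_two, mul_assoc, mul_neg_one, hCBq, hlr] <;>
        ring_nf <;> simp [hCBq, mul_comm, hlr]
  -- mapping under the automorphism
  have hnegA : amapB lam (-1 : LaurentSeries B) = -1 := by
    rw [show (amapB lam (-1 : LaurentSeries B)) = amapRH lam (-1) from rfl, map_neg, map_one]
  have hzeroA : amapB lam (0 : LaurentSeries B) = 0 := map_zero (amapRH lam)
  have hTmap : T.map (amapB lam) = TL := by
    rw [hT, hTL]
    refine Matrix.ext fun i j => ?_
    fin_cases i <;> fin_cases j <;> simp [Matrix.map_apply, amap_CB, hnegA, hzeroA]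
  have hT'map : T'.map (amapB lam) = T'L := by
    rw [hT', hT'L]
    refine Matrix.ext fun i j => ?_
    fin_cases i <;> fin_cases j <;> simp [Matrix.map_apply, amap_CB, hnegA, hzeroA]
  have hRdef : Rhat r r' R = (2 : LaurentSeries B) • (T * S * T') := rfl
  have hmapsmul : ∀ X : Matrix (Fin 2) (Fin 2) (LaurentSeries B),
      ((2 : LaurentSeries B) • X).map (amapB lam) = (2 : LaurentSeries B) • X.map (amapB lam) := by
    intro X
    refine Matrix.ext fun i j => ?_
    simp only [Matrix.map_apply, Matrix.smul_apply, smul_eq_mul]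
    rw [show amapB lam ((2 : LaurentSeries B) * X i j) = amapRH lam (2 * X i j) from rfl,
      map_mul, map_ofNat]
    rfl
  have hamapco : ⇑(amapRH lam) = (amapB lam : LaurentSeries B → LaurentSeries B) := rfl
  have hmapmul : ∀ X Y : Matrix (Fin 2) (Fin 2) (LaurentSeries B),
      (X * Y).map (amapB lam) = X.map (amapB lam) * Y.map (amapB lam) := by
    intro X Y
    rw [← hamapco, Matrix.map_mul]
  rw [hRdef, hmapsmul, hmapmul, hmapmul, hTmap, hT'map, hU]
  have hsmul1 : ∀ X Y : Matrix (Fin 2) (Fin 2) (LaurentSeries B),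
      ((2 : LaurentSeries B) • X) * Y = (2 : LaurentSeries B) • (X * Y) := by
    intro X Y
    refine Matrix.ext fun i j => ?_
    simp only [Matrix.mul_apply, Matrix.smul_apply, smul_eq_mul, Fin.sum_univ_two]
    ring
  have hsmul2 : ∀ X Y : Matrix (Fin 2) (Fin 2) (LaurentSeries B),
      X * ((2 : LaurentSeries B) • Y) = (2 : LaurentSeries B) • (X * Y) := by
    intro X Y
    refine Matrix.ext fun i j => ?_
    simp only [Matrix.mul_apply, Matrix.smul_apply, smul_eq_mul, Fin.sum_univ_two]
    ring
  have key : TL * S.map (amapB lam) * T'L * (TL * U' * T')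
      = TL * U' * T' * (T * S * T') := by
    simp only [mul_assoc]
    rw [← mul_assoc T'L TL, hTLL, one_mul, ← mul_assoc T' T, hTT, one_mul,
      ← mul_assoc (S.map (amapB lam)) U', h0, mul_assoc]
  rw [hsmul1, hsmul2, key]


end
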